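/- arXiv:2202.01746 — 3 statements merged into one kernel-verified Lean document; each statement's English description precedes it below -/
import Mathlib

section
/- For all n ≥ 2, the number of spanning trees of the fan graph F_n equals the Fibonacci number f_{2(n-1)}, where f_1 = f_2 = 1. -/
attribute [local instance] Classical.propDecidable


open SimpleGraph

/-- The fan graph on `n` vertices: vertex `0` is the hub `v_∞`, and vertices
`1, …, n-1` (representing `v_2, …, v_n`) form a path, each joined to the hub. -/
def fanGraph (n : ℕ) : SimpleGraph (Fin n) :=
  SimpleGraph.fromRel (fun i j =>
    ((i : ℕ) = 0 ∧ (j : ℕ) ≠ 0) ∨ ((i : ℕ) ≠ 0 ∧ (i : ℕ) + 1 = (j : ℕ)))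

/-- `T` is a spanning tree of `G`: a subgraph (on the same vertex set) that is a tree. -/
def IsSpanningTree {V : Type*} (G T : SimpleGraph V) : Prop :=
  T ≤ G ∧ T.IsTree

/-- The number of spanning trees of the fan graph `F_n`. -/
noncomputable def numSpanningTrees (n : ℕ) : ℕ :=
  Nat.card {T : SimpleGraph (Fin n) // IsSpanningTree (fanGraph n) T}


/-- Automaton step: state = `some q` where `q` records whether the current block
already has a spoke; `none` = failure. Input `(s, b)`: `s` = spoke at current
vertex, `b` = path edge to the next vertex (continue block). -/
def stp : Option Bool → Bool × Bool → Option Bool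
  | none, _ => none
  | some q, (s, b) =>
    if q && s then none
    else if b then some (q || s)
    else if q || s then some false else none

lemma foldl_stp_none (l : List (Bool × Bool)) : List.foldl stp none l = none := by
  induction l with
  | nil => rfl
  | cons x l ih => simpa [stp] using ih

/-- positions `a, a+1, …, a+d-1`. -/
def seg (S B : ℕ → Bool) (a d : ℕ) : List (Bool × Bool) :=
  (List.range d).map fun i => (S (a + i), B (a + i))

lemma seg_append (S B : ℕ → Bool) (a d e : ℕ) :
    seg S B a (d + e) = seg S B a d ++ seg S B (a + d) e := by
  unfold seg
  rw [List.range_add, List.map_append, List.map_map]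
  congr 1
  apply List.map_congr_left
  intro i _
  simp [Function.comp, add_assoc]

lemma seg_zero (S B : ℕ → Bool) (a : ℕ) : seg S B a 0 = [] := rfl

lemma seg_one (S B : ℕ → Bool) (a : ℕ) : seg S B a 1 = [(S a, B a)] := by
  simp [seg, List.range_succ]

lemma seg_succ_front (S B : ℕ → Bool) (a d : ℕ) :
    seg S B a (d + 1) = (S a, B a) :: seg S B (a + 1) d := by
  have : d + 1 = 1 + d := by omega
  rw [this, seg_append, seg_one]
  rfl

/-- number of spokes among positions `a, …, a+d-1`. -/
def cntS (S : ℕ → Bool) : ℕ → ℕ → ℕ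
  | _, 0 => 0
  | a, d + 1 => (if S a then 1 else 0) + cntS S (a + 1) d

lemma cntS_back (S : ℕ → Bool) : ∀ d a, cntS S a (d + 1) = cntS S a d + (if S (a + d) then 1 else 0) := by
  intro d
  induction d with
  | zero => intro a; simp [cntS]
  | succ d ih =>
      intro a
      show (if S a then 1 else 0) + cntS S (a+1) (d+1) = _
      rw [ih (a+1)]
      show _ = (if S a then 1 else 0) + cntS S (a+1) d + _
      have : a + 1 + d = a + (d+1) := by omega
      rw [this]
      omega

lemma fold_block (S B : ℕ → Bool) : ∀ (d a : ℕ) (q : Bool), (∀ i, i < d → B (a + i) = true) →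
    List.foldl stp (some q) (seg S B a d) =
      if cntS S a d + (if q then 1 else 0) ≤ 1 then
        some (decide (cntS S a d + (if q then 1 else 0) = 1))
      else none := by
  intro d
  induction d with
  | zero =>
      intro a q _
      cases q <;> simp [seg_zero, cntS]
  | succ d ih =>
      intro a q hB
      have hB' : ∀ i, i < d → B (a + 1 + i) = true := by
        intro i hi
        have h := hB (i + 1) (by omega)
        have e : a + 1 + i = a + (i + 1) := by omega
        rw [e]; exact h
      rw [seg_succ_front]
      have hBa : B a = true := by simpa using hB 0 (by omega)
      show List.foldl stp (stp (some q) (S a, B a)) _ = _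
      rw [hBa]
      cases q <;> cases hSa : S a
      · -- q = false, S a = false
        have h1 : stp (some false) (false, true) = some false := rfl
        rw [h1, ih (a+1) false hB']
        simp [cntS, hSa]
      · -- q = false, S a = true
        have h1 : stp (some false) (true, true) = some true := rfl
        rw [h1, ih (a+1) true hB']
        have e1 : (cntS S (a+1) d + if (true : Bool) = true then 1 else 0)
            = cntS S a (d+1) + if (false : Bool) = true then 1 else 0 := by
          simp [cntS, hSa]; omega
        rw [e1]
      · -- q = true, S a = false
        have h1 : stp (some true) (false, true) = some true := rfl
        rw [h1, ih (a+1) true hB']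
        have e1 : (cntS S (a+1) d + if (true : Bool) = true then 1 else 0)
            = cntS S a (d+1) + if (true : Bool) = true then 1 else 0 := by
          simp [cntS, hSa]
        rw [e1]
      · -- q = true, S a = true
        have h1 : stp (some true) (true, true) = none := rfl
        rw [h1, foldl_stp_none]
        have hc : cntS S a (d+1) = 1 + cntS S (a+1) d := by simp [cntS, hSa]
        rw [hc]
        have h2 : ¬ (1 + cntS S (a + 1) d + (if (true : Bool) = true then 1 else 0) ≤ 1) := by
          simp
        rw [if_neg h2]

lemma stp_close (q s : Bool) :
    stp (some q) (s, false) = if q && s then none else if q || s then some false else none := rfl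

/-- every "closed block" interval has exactly one spoke. -/
def GoodP (S B : ℕ → Bool) (m : ℕ) : Prop :=
  ∀ a b, 1 ≤ a → a ≤ b → b ≤ m → (2 ≤ a → B (a - 1) = false) → B b = false →
    (∀ i, a ≤ i → i < b → B i = true) → cntS S a (b + 1 - a) = 1

lemma fold_of_good (S B : ℕ → Bool) (m : ℕ) (hm : B m = false) (hg : GoodP S B m) :
    List.foldl stp (some false) (seg S B 1 m) = some false := by
  suffices h : ∀ d t, m - t ≤ d → t ≤ m → (t = 0 ∨ B t = false) →
      List.foldl stp (some false) (seg S B (t + 1) (m - t)) = some false by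
    simpa using h m 0 (by omega) (by omega) (Or.inl rfl)
  intro d
  induction d with
  | zero =>
      intro t h1 _ _
      have : m - t = 0 := by omega
      rw [this, seg_zero]; rfl
  | succ d ih =>
      intro t h1 h2 hbd
      rcases Nat.eq_or_lt_of_le h2 with he | hlt
      · have : m - t = 0 := by omega
        rw [this, seg_zero]; rfl
      · have hex : ∃ x, t < x ∧ x ≤ m ∧ B x = false := ⟨m, hlt, le_rfl, hm⟩
        obtain ⟨b, hb1, hb2, hb3, hmin⟩ :
            ∃ b, t < b ∧ b ≤ m ∧ B b = false ∧ ∀ i, t < i → i < b → B i = true := by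
          have hble : Nat.find hex ≤ m := Nat.find_min' hex ⟨hlt, le_rfl, hm⟩
          refine ⟨Nat.find hex, (Nat.find_spec hex).1, hble, (Nat.find_spec hex).2.2, ?_⟩
          intro i hi1 hi2
          by_contra hc
          have hBi : B i = false := by simpa using hc
          exact Nat.find_min hex hi2 ⟨hi1, by omega, hBi⟩
        have hcnt : cntS S (t + 1) (b + 1 - (t + 1)) = 1 := by
          refine hg (t + 1) b (by omega) (by omega) hb2 ?_ hb3
            (fun i hi1 hi2 => hmin i (by omega) hi2)
          intro h2a
          have ht1 : 1 ≤ t := by omega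
          have : B t = false := hbd.resolve_left (by omega)
          have e : t + 1 - 1 = t := by omega
          rw [e]; exact this
        have e3 : b + 1 - (t + 1) = (b - t - 1) + 1 := by omega
        rw [e3, cntS_back] at hcnt
        have e4 : t + 1 + (b - t - 1) = b := by omega
        rw [e4] at hcnt
        have hA : List.foldl stp (some false) (seg S B (t + 1) (b - t - 1)) =
            some (decide (cntS S (t + 1) (b - t - 1) = 1)) := by
          rw [fold_block S B (b - t - 1) (t + 1) false
            (fun i hi => hmin (t + 1 + i) (by omega) (by omega))]
          have hb01 : (if S b then 1 else 0) ≤ 1 := by split <;> omega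
          have hle : cntS S (t + 1) (b - t - 1) +
              (if (false : Bool) = true then 1 else 0) ≤ 1 := by
            simp only [Bool.false_eq_true, if_false, add_zero]; omega
          rw [if_pos hle]
          simp only [Bool.false_eq_true, if_false, add_zero]
        have hstep : stp (some (decide (cntS S (t + 1) (b - t - 1) = 1))) (S b, B b)
            = some false := by
          rw [hb3]
          cases hSb : S b
          · rw [hSb] at hcnt
            simp at hcnt
            rw [hcnt]; rfl
          · rw [hSb] at hcnt
            simp at hcnt
            have h00 : cntS S (t + 1) (b - t - 1) = 0 := by omega
            rw [h00]; rfl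
        have hd1 : m - t = (b - t - 1) + (1 + (m - b)) := by omega
        rw [hd1, seg_append, e4, seg_append, seg_one]
        rw [List.foldl_append, hA, List.foldl_append, List.foldl_cons, List.foldl_nil, hstep]
        exact ih b (by omega) (by omega) (Or.inr hb3)

lemma good_of_fold (S B : ℕ → Bool) (m : ℕ)
    (hf : List.foldl stp (some false) (seg S B 1 m) ≠ none) : GoodP S B m := by
  intro a b ha hab hbm hleft hBb hmid
  have hd : m = (a - 1) + ((b - a) + (1 + (m - b))) := by omega
  rw [hd, seg_append] at hf
  have e1 : 1 + (a - 1) = a := by omega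
  rw [e1, seg_append] at hf
  have e2 : a + (b - a) = b := by omega
  rw [e2, seg_append, seg_one] at hf
  rw [List.foldl_append, List.foldl_append, List.foldl_append] at hf
  set r1 := List.foldl stp (some false) (seg S B 1 (a - 1)) with hr1def
  have hr1 : r1 ≠ none := by
    intro h
    rw [h, foldl_stp_none, foldl_stp_none, foldl_stp_none] at hf
    exact hf rfl
  have stp_close_ne : ∀ (st : Option Bool) (s : Bool), stp st (s, false) ≠ none →
      stp st (s, false) = some false := by
    intro st s h
    cases st with
    | none => exact absurd rfl h
    | some q => cases q <;> cases s <;> first | rfl | (exact absurd rfl h)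
  have hr1f : r1 = some false := by
    rcases Nat.lt_or_ge a 2 with h2 | h2
    · have : a - 1 = 0 := by omega
      rw [hr1def, this, seg_zero]; rfl
    · have hd2 : a - 1 = (a - 2) + 1 := by omega
      have e3 : 1 + (a - 2) = a - 1 := by omega
      have hrw : r1 = stp (List.foldl stp (some false) (seg S B 1 (a - 2)))
          (S (a - 1), false) := by
        conv_lhs => rw [hr1def, hd2, seg_append, e3, seg_one, List.foldl_append,
          List.foldl_cons, List.foldl_nil, hleft h2]
      rw [hrw] at hr1 ⊢
      exact stp_close_ne _ _ hr1
  rw [hr1f] at hf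
  rw [fold_block S B (b - a) a false (fun i hi => hmid (a + i) (by omega) (by omega))] at hf
  simp only [Bool.false_eq_true, if_false, add_zero] at hf
  have hcle : cntS S a (b - a) ≤ 1 := by
    by_contra hc
    rw [if_neg (by omega), foldl_stp_none, foldl_stp_none] at hf
    exact hf rfl
  rw [if_pos hcle, List.foldl_cons, List.foldl_nil, hBb] at hf
  have e4 : b + 1 - a = (b - a) + 1 := by omega
  rw [e4, cntS_back]
  have e5 : a + (b - a) = b := by omega
  rw [e5]
  rcases Nat.eq_or_lt_of_le hcle with h1 | h1
  · -- cnt = 1, need S b = false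
    rw [h1] at hf ⊢
    cases hSb : S b
    · simp
    · rw [hSb] at hf
      have : stp (some (decide (1 = 1))) (true, false) = none := rfl
      rw [this, foldl_stp_none] at hf
      exact absurd rfl hf
  · have h0 : cntS S a (b - a) = 0 := by omega
    rw [h0] at hf ⊢
    cases hSb : S b
    · rw [hSb] at hf
      have : stp (some (decide (0 = 1))) (false, false) = none := rfl
      rw [this, foldl_stp_none] at hf
      exact absurd rfl hf
    · simp

lemma cntS_zero_iff (S : ℕ → Bool) : ∀ d a, cntS S a d = 0 ↔ ∀ j, a ≤ j → j < a + d → S j = false := by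
  intro d
  induction d with
  | zero =>
      intro a
      constructor
      · intro _ j h1 h2; omega
      · intro _; rfl
  | succ d ih =>
      intro a
      constructor
      · intro h j h1 h2
        have hSa : S a = false ∧ cntS S (a + 1) d = 0 := by
          cases hS : S a
          · refine ⟨rfl, ?_⟩
            simpa [cntS, hS] using h
          · exfalso; simp [cntS, hS] at h
        rcases Nat.eq_or_lt_of_le h1 with he | hl
        · rw [← he]; exact hSa.1
        · exact (ih (a + 1)).1 hSa.2 j (by omega) (by omega)
      · intro h
        have hSa : S a = false := h a le_rfl (by omega)
        have : cntS S (a + 1) d = 0 := (ih (a + 1)).2 (fun j h1 h2 => h j (by omega) (by omega))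
        simp [cntS, hSa, this]

lemma cntS_one_exists (S : ℕ → Bool) : ∀ d a, cntS S a d = 1 →
    ∃ j, a ≤ j ∧ j < a + d ∧ S j = true := by
  intro d
  induction d with
  | zero => intro a h; simp [cntS] at h
  | succ d ih =>
      intro a h
      cases hS : S a
      · rw [show cntS S a (d+1) = cntS S (a+1) d by simp [cntS, hS]] at h
        obtain ⟨j, h1, h2, h3⟩ := ih (a + 1) h
        exact ⟨j, by omega, by omega, h3⟩
      · exact ⟨a, le_rfl, by omega, hS⟩

lemma cntS_one_unique (S : ℕ → Bool) : ∀ d a, cntS S a d = 1 →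
    ∀ i j, a ≤ i → i < a + d → a ≤ j → j < a + d → S i = true → S j = true → i = j := by
  intro d
  induction d with
  | zero => intro a h; simp [cntS] at h
  | succ d ih =>
      intro a h i j hi1 hi2 hj1 hj2 hSi hSj
      cases hS : S a
      · rw [show cntS S a (d+1) = cntS S (a+1) d by simp [cntS, hS]] at h
        have hia : i ≠ a := fun he => by rw [he, hS] at hSi; exact Bool.false_ne_true hSi
        have hja : j ≠ a := fun he => by rw [he, hS] at hSj; exact Bool.false_ne_true hSj
        exact ih (a + 1) h i j (by omega) (by omega) (by omega) (by omega) hSi hSj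
      · have h0 : cntS S (a + 1) d = 0 := by simp [cntS, hS] at h; omega
        have hz := (cntS_zero_iff S d (a + 1)).1 h0
        have hia : i = a := by
          by_contra hc
          have := hz i (by omega) (by omega)
          rw [this] at hSi; exact Bool.false_ne_true hSi
        have hja : j = a := by
          by_contra hc
          have := hz j (by omega) (by omega)
          rw [this] at hSj; exact Bool.false_ne_true hSj
        rw [hia, hja]

lemma cntS_one_of (S : ℕ → Bool) : ∀ d a,
    (∃ j, a ≤ j ∧ j < a + d ∧ S j = true) →
    (∀ i j, a ≤ i → i < a + d → a ≤ j → j < a + d → S i = true → S j = true → i = j) →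
    cntS S a d = 1 := by
  intro d
  induction d with
  | zero => intro a ⟨j, h1, h2, _⟩ _; omega
  | succ d ih =>
      intro a ⟨j, hj1, hj2, hj3⟩ huniq
      cases hS : S a
      · have hja : j ≠ a := fun he => by rw [he, hS] at hj3; exact Bool.false_ne_true hj3
        have : cntS S (a + 1) d = 1 := by
          refine ih (a + 1) ⟨j, by omega, by omega, hj3⟩ ?_
          intro i j' h1 h2 h3 h4 h5 h6
          exact huniq i j' (by omega) (by omega) (by omega) (by omega) h5 h6
        simp [cntS, hS, this]
      · have h0 : cntS S (a + 1) d = 0 := by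
          rw [cntS_zero_iff]
          intro j' h1 h2
          by_contra hc
          have hSj' : S j' = true := by simpa using hc
          have := huniq j' a (by omega) (by omega) le_rfl (by omega) hSj' hS
          omega
        simp [cntS, hS, h0]

lemma find_block (B : ℕ → Bool) (m j : ℕ) (hm : B m = false) (h1 : 1 ≤ j) (h2 : j ≤ m) :
    ∃ a b, 1 ≤ a ∧ a ≤ j ∧ j ≤ b ∧ b ≤ m ∧ (2 ≤ a → B (a - 1) = false) ∧ B b = false ∧
      ∀ i, a ≤ i → i < b → B i = true := by
  have hex : ∃ x, j ≤ x ∧ B x = false := ⟨m, h2, hm⟩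
  obtain ⟨b, hb1, hb2, hbm, hminb⟩ :
      ∃ b, j ≤ b ∧ B b = false ∧ b ≤ m ∧ ∀ i, j ≤ i → i < b → B i = true := by
    refine ⟨Nat.find hex, (Nat.find_spec hex).1, (Nat.find_spec hex).2,
      Nat.find_min' hex ⟨h2, hm⟩, ?_⟩
    intro i h1' h2'
    by_contra hc
    have hBi : B i = false := by simpa using hc
    exact Nat.find_min hex h2' ⟨h1', hBi⟩
  obtain ⟨g, hg1, hg2, hg3⟩ :
      ∃ g, g ≤ j - 1 ∧ (1 ≤ g → B g = false) ∧ ∀ i, g < i → i ≤ j - 1 → B i = true := by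
    refine ⟨Nat.findGreatest (fun x => B x = false) (j - 1), Nat.findGreatest_le _, ?_, ?_⟩
    · intro hg
      have hne : Nat.findGreatest (fun x => B x = false) (j - 1) ≠ 0 := by omega
      exact (Nat.findGreatest_eq_iff.1 rfl).2.1 hne
    · intro i hi1 hi2
      by_contra hc
      have hBi : B i = false := by simpa using hc
      exact Nat.findGreatest_is_greatest hi1 hi2 hBi
  refine ⟨g + 1, b, by omega, by omega, hb1, hbm, ?_, hb2, ?_⟩
  · intro h2a
    have e : g + 1 - 1 = g := by omega
    rw [e]; exact hg2 (by omega)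
  · intro i hi1 hi2
    by_cases hij : i < j
    · exact hg3 i (by omega) (by omega)
    · exact hminb i (by omega) hi2

def Wc : ℕ → Option Bool → Bool → ℕ
  | 0, st, r => if st = some r then 1 else 0
  | k + 1, st, r => ∑ x : Bool × Bool, Wc k (stp st x) r

lemma sum_bb (f : Bool × Bool → ℕ) :
    ∑ x : Bool × Bool, f x
      = f (false, false) + f (false, true) + f (true, false) + f (true, true) := by
  rw [Fintype.sum_prod_type, Fintype.sum_bool, Fintype.sum_bool, Fintype.sum_bool]
  ring

lemma Wc_none : ∀ (k : ℕ) (r : Bool), Wc k none r = 0 := by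
  intro k
  induction k with
  | zero => intro r; simp [Wc]
  | succ k ih =>
      intro r
      show (∑ x : Bool × Bool, Wc k (stp none x) r) = 0
      have : ∀ x : Bool × Bool, stp none x = none := fun _ => rfl
      simp [this, ih]

lemma Wc_vals : ∀ k : ℕ,
    Wc k (some false) false = Nat.fib (2 * k + 1) ∧
    Wc k (some false) true = Nat.fib (2 * k) ∧
    Wc k (some true) false = Nat.fib (2 * k) ∧
    Wc k (some true) true + Nat.fib (2 * k) = Nat.fib (2 * k + 1) := by
  intro k
  induction k with
  | zero => refine ⟨?_, ?_, ?_, ?_⟩ <;> simp [Wc]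
  | succ k ih =>
      obtain ⟨h1, h2, h3, h4⟩ := ih
      have eF : ∀ r, Wc (k + 1) (some false) r
          = Wc k none r + Wc k (some false) r + Wc k (some false) r + Wc k (some true) r := by
        intro r
        show (∑ x : Bool × Bool, Wc k (stp (some false) x) r) = _
        rw [sum_bb]
        rfl
      have eT : ∀ r, Wc (k + 1) (some true) r
          = Wc k (some false) r + Wc k (some true) r + Wc k none r + Wc k none r := by
        intro r
        show (∑ x : Bool × Bool, Wc k (stp (some true) x) r) = _
        rw [sum_bb]
        rfl
      have e1 : 2 * (k + 1) = 2 * k + 2 := by ring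
      have e2 : 2 * (k + 1) + 1 = 2 * k + 1 + 2 := by ring
      have f1 : Nat.fib (2 * k + 2) = Nat.fib (2 * k) + Nat.fib (2 * k + 1) := Nat.fib_add_two
      have f2 : Nat.fib (2 * k + 1 + 2) = Nat.fib (2 * k + 1) + Nat.fib (2 * k + 1 + 1) :=
        Nat.fib_add_two
      have e3 : 2 * k + 1 + 1 = 2 * k + 2 := by ring
      rw [e3] at f2
      have hn := Wc_none k
      refine ⟨?_, ?_, ?_, ?_⟩
      · rw [e2, eF false, h1, h3, hn]; omega
      · rw [e1, eF true, h2, hn]; omega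
      · rw [e1, eT false, h1, h3, hn]; omega
      · rw [e2, e1, eT true, h2, hn]; omega

lemma natCard_sigma {ι : Type} [Fintype ι] (f : ι → Type) [∀ i, Finite (f i)] :
    Nat.card ((i : ι) × f i) = ∑ i, Nat.card (f i) := by
  letI : ∀ i, Fintype (f i) := fun i => Fintype.ofFinite _
  simp [Nat.card_eq_fintype_card, Fintype.card_sigma]

lemma cardW : ∀ (k : ℕ) (st : Option Bool) (r : Bool),
    Nat.card {c : Fin k → Bool × Bool // List.foldl stp st (List.ofFn c) = some r}
      = Wc k st r := by
  intro k
  induction k with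
  | zero =>
      intro st r
      by_cases h : st = some r
      · haveI : Unique {c : Fin 0 → Bool × Bool // List.foldl stp st (List.ofFn c) = some r} := {
          default := ⟨fun i => (false, false), by simp [List.ofFn_zero, h]⟩
          uniq := fun c => Subtype.ext (funext fun i => i.elim0) }
        rw [Nat.card_unique]
        simp [Wc, h]
      · haveI : IsEmpty {c : Fin 0 → Bool × Bool // List.foldl stp st (List.ofFn c) = some r} :=
          ⟨fun c => h (by simpa [List.ofFn_zero] using c.2)⟩
        rw [Nat.card_of_isEmpty]
        simp [Wc, h]
  | succ k ih =>
      intro st r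
      have equiv : {c : Fin (k + 1) → Bool × Bool // List.foldl stp st (List.ofFn c) = some r}
          ≃ (x : Bool × Bool) ×
            {c : Fin k → Bool × Bool // List.foldl stp (stp st x) (List.ofFn c) = some r} := {
        toFun := fun c => ⟨c.1 0, ⟨Fin.tail c.1, by
          have h := c.2
          rw [List.ofFn_succ, List.foldl_cons] at h
          exact h⟩⟩
        invFun := fun p => ⟨Fin.cons p.1 p.2.1, by
          rw [List.ofFn_succ, List.foldl_cons]
          simpa [Fin.cons_zero, Fin.cons_succ] using p.2.2⟩
        left_inv := fun c => Subtype.ext (Fin.cons_self_tail c.1)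
        right_inv := fun p => by
          rcases p with ⟨x, c, hc⟩
          simp [Fin.cons_zero, Fin.tail_cons]
          rfl }
      rw [Nat.card_congr equiv, natCard_sigma]
      show (∑ x : Bool × Bool, Nat.card _) = Wc (k + 1) st r
      have : ∀ x : Bool × Bool,
          Nat.card {c : Fin k → Bool × Bool // List.foldl stp (stp st x) (List.ofFn c) = some r}
            = Wc k (stp st x) r := fun x => ih (stp st x) r
      rw [Finset.sum_congr rfl (fun x _ => this x)]
      rfl

lemma fin_eq {n a b : ℕ} (ha : a < n) (hb : b < n) (h : a = b) : (⟨a, ha⟩ : Fin n) = ⟨b, hb⟩ := by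
  subst h; rfl

lemma adj_congr {n : ℕ} (G : SimpleGraph (Fin n)) {a b c d : Fin n} (h1 : a = c) (h2 : b = d) :
    G.Adj a b ↔ G.Adj c d := by rw [h1, h2]

lemma fan_adj (k : ℕ) (u v : Fin (k + 2)) :
    (fanGraph (k + 2)).Adj u v ↔ u ≠ v ∧
      ((u : ℕ) = 0 ∨ (v : ℕ) = 0 ∨ (u : ℕ) + 1 = (v : ℕ) ∨ (v : ℕ) + 1 = (u : ℕ)) := by
  rw [fanGraph, SimpleGraph.fromRel_adj]
  constructor
  · rintro ⟨hne, h⟩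
    refine ⟨hne, ?_⟩
    rcases h with (⟨h1, h2⟩ | ⟨h1, h2⟩) | (⟨h1, h2⟩ | ⟨h1, h2⟩) <;> omega
  · rintro ⟨hne, h⟩
    refine ⟨hne, ?_⟩
    have hv : (u : ℕ) ≠ (v : ℕ) := fun he => hne (Fin.ext he)
    by_cases hu0 : (u : ℕ) = 0
    · exact Or.inl (Or.inl ⟨hu0, by omega⟩)
    · by_cases hv0 : (v : ℕ) = 0
      · exact Or.inr (Or.inl ⟨hv0, by omega⟩)
      · rcases h with h | h | h | h
        · omega
        · omega
        · exact Or.inl (Or.inr ⟨hu0, h⟩)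
        · exact Or.inr (Or.inr ⟨hv0, h⟩)

def cS (k : ℕ) (D : (Fin k → Bool × Bool) × Bool) : ℕ → Bool := fun j =>
  if h : 1 ≤ j ∧ j ≤ k then (D.1 ⟨j - 1, by omega⟩).1
  else if j = k + 1 then D.2 else false

def cB (k : ℕ) (D : (Fin k → Bool × Bool) × Bool) : ℕ → Bool := fun j =>
  if h : 1 ≤ j ∧ j ≤ k then (D.1 ⟨j - 1, by omega⟩).2 else false

def Valid (k : ℕ) (D : (Fin k → Bool × Bool) × Bool) : Prop :=
  List.foldl stp (some false) (seg (cS k D) (cB k D) 1 (k + 1)) = some false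

def cG (k : ℕ) (D : (Fin k → Bool × Bool) × Bool) : SimpleGraph (Fin (k + 2)) :=
  SimpleGraph.fromRel fun u v =>
    ((u : ℕ) = 0 ∧ cS k D (v : ℕ) = true) ∨ ((u : ℕ) + 1 = (v : ℕ) ∧ cB k D (u : ℕ) = true)

noncomputable def gRead (k : ℕ) (T : SimpleGraph (Fin (k + 2))) : (Fin k → Bool × Bool) × Bool :=
  (fun i => (decide (T.Adj 0 ⟨(i : ℕ) + 1, by have := i.isLt; omega⟩),
             decide (T.Adj ⟨(i : ℕ) + 1, by have := i.isLt; omega⟩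
                           ⟨(i : ℕ) + 2, by have := i.isLt; omega⟩)),
   decide (T.Adj 0 ⟨k + 1, by omega⟩))

lemma cS_bounds {k : ℕ} {D : (Fin k → Bool × Bool) × Bool} {j : ℕ} (h : cS k D j = true) :
    1 ≤ j ∧ j ≤ k + 1 := by
  by_contra hc
  have h1 : ¬ (1 ≤ j ∧ j ≤ k) := by omega
  have h2 : j ≠ k + 1 := by omega
  unfold cS at h
  rw [dif_neg h1, if_neg h2] at h
  exact Bool.false_ne_true h

lemma cB_bounds {k : ℕ} {D : (Fin k → Bool × Bool) × Bool} {j : ℕ} (h : cB k D j = true) :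
    1 ≤ j ∧ j ≤ k := by
  by_contra hc
  unfold cB at h
  rw [dif_neg hc] at h
  exact Bool.false_ne_true h

lemma cB_top {k : ℕ} (D : (Fin k → Bool × Bool) × Bool) : cB k D (k + 1) = false := by
  unfold cB
  rw [dif_neg (by omega)]

lemma gRead_S (k : ℕ) (T : SimpleGraph (Fin (k + 2))) (j : ℕ) (h1 : 1 ≤ j) (h2 : j ≤ k + 1)
    (hj : j < k + 2) : cS k (gRead k T) j = true ↔ T.Adj 0 ⟨j, hj⟩ := by
  unfold cS gRead
  by_cases h : 1 ≤ j ∧ j ≤ k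
  · rw [dif_pos h]
    simp only [decide_eq_true_eq]
    exact adj_congr T rfl (fin_eq _ _ (by omega))
  · have hk1 : j = k + 1 := by omega
    subst hk1
    rw [dif_neg h, if_pos rfl]
    simp only [decide_eq_true_eq]

lemma gRead_B (k : ℕ) (T : SimpleGraph (Fin (k + 2))) (j : ℕ) (h1 : 1 ≤ j) (h2 : j ≤ k)
    (hj : j < k + 2) (hj2 : j + 1 < k + 2) :
    cB k (gRead k T) j = true ↔ T.Adj ⟨j, hj⟩ ⟨j + 1, hj2⟩ := by
  unfold cB gRead
  rw [dif_pos ⟨h1, h2⟩]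
  simp only [decide_eq_true_eq]
  exact adj_congr T (fin_eq _ _ (by omega)) (fin_eq _ _ (by omega))

lemma cG_adj_spoke (k : ℕ) (D : (Fin k → Bool × Bool) × Bool) (j : ℕ) (h1 : 1 ≤ j)
    (hj : j < k + 2) : (cG k D).Adj 0 ⟨j, hj⟩ ↔ cS k D j = true := by
  unfold cG
  rw [SimpleGraph.fromRel_adj]
  have hB0 : cB k D 0 = false := by unfold cB; rw [dif_neg (by omega)]
  constructor
  · rintro ⟨hne, (⟨_, hS⟩ | ⟨hc, hB⟩) | (⟨hv0, _⟩ | ⟨hc, _⟩)⟩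
    · exact hS
    · exfalso
      have : (0 : Fin (k + 2)).val = 0 := rfl
      rw [this] at hB
      rw [hB0] at hB
      exact Bool.false_ne_true hB
    · exfalso
      have : ((⟨j, hj⟩ : Fin (k + 2)) : ℕ) = j := rfl
      omega
    · exfalso
      have h0 : ((0 : Fin (k + 2)) : ℕ) = 0 := rfl
      have hjj : ((⟨j, hj⟩ : Fin (k + 2)) : ℕ) = j := rfl
      omega
  · intro hS
    refine ⟨?_, Or.inl (Or.inl ⟨rfl, hS⟩)⟩
    intro he
    have := congrArg Fin.val he
    have h0 : ((0 : Fin (k + 2)) : ℕ) = 0 := rfl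
    have hjj : ((⟨j, hj⟩ : Fin (k + 2)) : ℕ) = j := rfl
    omega

lemma cG_adj_path (k : ℕ) (D : (Fin k → Bool × Bool) × Bool) (j : ℕ) (h1 : 1 ≤ j)
    (hj : j < k + 2) (hj2 : j + 1 < k + 2) :
    (cG k D).Adj ⟨j, hj⟩ ⟨j + 1, hj2⟩ ↔ cB k D j = true := by
  unfold cG
  rw [SimpleGraph.fromRel_adj]
  constructor
  · rintro ⟨hne, (⟨h0, _⟩ | ⟨_, hB⟩) | (⟨h0, _⟩ | ⟨hc, _⟩)⟩
    · exfalso; have : ((⟨j, hj⟩ : Fin (k + 2)) : ℕ) = j := rfl; omega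
    · exact hB
    · exfalso; have : ((⟨j + 1, hj2⟩ : Fin (k + 2)) : ℕ) = j + 1 := rfl; omega
    · exfalso
      have e1 : ((⟨j, hj⟩ : Fin (k + 2)) : ℕ) = j := rfl
      have e2 : ((⟨j + 1, hj2⟩ : Fin (k + 2)) : ℕ) = j + 1 := rfl
      omega
  · intro hB
    refine ⟨?_, Or.inl (Or.inr ⟨rfl, hB⟩)⟩
    intro he
    have := congrArg Fin.val he
    have e1 : ((⟨j, hj⟩ : Fin (k + 2)) : ℕ) = j := rfl
    have e2 : ((⟨j + 1, hj2⟩ : Fin (k + 2)) : ℕ) = j + 1 := rfl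
    omega

lemma cG_adj_cases {k : ℕ} {D : (Fin k → Bool × Bool) × Bool} {u v : Fin (k + 2)}
    (h : (cG k D).Adj u v) :
    ((u : ℕ) = 0 ∧ 1 ≤ (v : ℕ) ∧ cS k D (v : ℕ) = true) ∨
    ((v : ℕ) = 0 ∧ 1 ≤ (u : ℕ) ∧ cS k D (u : ℕ) = true) ∨
    ((u : ℕ) + 1 = (v : ℕ) ∧ 1 ≤ (u : ℕ) ∧ cB k D (u : ℕ) = true) ∨
    ((v : ℕ) + 1 = (u : ℕ) ∧ 1 ≤ (v : ℕ) ∧ cB k D (v : ℕ) = true) := by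
  unfold cG at h
  rw [SimpleGraph.fromRel_adj] at h
  obtain ⟨hne, h⟩ := h
  have hnv : (u : ℕ) ≠ (v : ℕ) := fun he => hne (Fin.ext he)
  rcases h with (⟨h1, h2⟩ | ⟨h1, h2⟩) | (⟨h1, h2⟩ | ⟨h1, h2⟩)
  · exact Or.inl ⟨h1, (cS_bounds h2).1, h2⟩
  · exact Or.inr (Or.inr (Or.inl ⟨h1, (cB_bounds h2).1, h2⟩))
  · exact Or.inr (Or.inl ⟨h1, (cS_bounds h2).1, h2⟩)
  · exact Or.inr (Or.inr (Or.inr ⟨h1, (cB_bounds h2).1, h2⟩))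

lemma cG_le (k : ℕ) (D : (Fin k → Bool × Bool) × Bool) : cG k D ≤ fanGraph (k + 2) := by
  intro u v h
  rw [fan_adj]
  refine ⟨h.ne, ?_⟩
  rcases cG_adj_cases h with ⟨h1, _, _⟩ | ⟨h1, _, _⟩ | ⟨h1, _, _⟩ | ⟨h1, _, _⟩ <;> omega

lemma no_cross {k : ℕ} (H : SimpleGraph (Fin (k + 2))) (hH : H ≤ fanGraph (k + 2))
    (a b : ℕ) (ha : 1 ≤ a) (hab : a ≤ b) (hb : b ≤ k + 1)
    (hspoke : ∀ (l : ℕ) (hl : l < k + 2), a ≤ l → l ≤ b → ¬H.Adj 0 ⟨l, hl⟩)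
    (hleft : ∀ (h2 : 2 ≤ a) (hl1 : a - 1 < k + 2) (hl2 : a < k + 2), ¬H.Adj ⟨a - 1, hl1⟩ ⟨a, hl2⟩)
    (hright : ∀ (hr1 : b < k + 2) (hr2 : b + 1 < k + 2), ¬H.Adj ⟨b, hr1⟩ ⟨b + 1, hr2⟩)
    (x : Fin (k + 2)) (hx : (x : ℕ) < a ∨ b < (x : ℕ))
    (j : ℕ) (hj1 : a ≤ j) (hj2 : j ≤ b) (hjlt : j < k + 2) :
    ¬H.Reachable x ⟨j, hjlt⟩ := by
  intro hr
  obtain ⟨p⟩ := hr.symm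
  obtain ⟨d, _, hdf, hds⟩ := p.exists_boundary_dart {v : Fin (k + 2) | a ≤ (v : ℕ) ∧ (v : ℕ) ≤ b}
    ⟨hj1, hj2⟩ (by intro hmem; obtain ⟨c1, c2⟩ := hmem; omega)
  have hadj : H.Adj d.fst d.snd := d.adj
  have hfan := hH hadj
  rw [fan_adj] at hfan
  obtain ⟨hne, hsh⟩ := hfan
  obtain ⟨hf1, hf2⟩ := hdf
  have hs' : (d.snd : ℕ) < a ∨ b < (d.snd : ℕ) := by
    by_contra hc
    push_neg at hc
    exact hds ⟨hc.1, hc.2⟩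
  rcases hsh with h0 | h0 | h0 | h0
  · omega
  · have e0 : d.snd = (0 : Fin (k + 2)) := Fin.ext h0
    have h' := hadj.symm
    rw [e0] at h'
    refine hspoke (d.fst : ℕ) d.fst.isLt (by omega) (by omega) ?_
    rw [Fin.eta]
    exact h'
  · have hfb : (d.fst : ℕ) = b := by omega
    have hsb : (d.snd : ℕ) = b + 1 := by omega
    exact hright (by omega) (by omega) ((adj_congr H (Fin.ext hfb) (Fin.ext hsb)).1 hadj)
  · have hfa : (d.fst : ℕ) = a := by omega
    have hsa : (d.snd : ℕ) = a - 1 := by omega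
    by_cases h00 : (d.snd : ℕ) = 0
    · have e0 : d.snd = (0 : Fin (k + 2)) := Fin.ext h00
      have h' := hadj.symm
      rw [e0] at h'
      refine hspoke (d.fst : ℕ) d.fst.isLt (by omega) (by omega) ?_
      rw [Fin.eta]
      exact h'
    · exact hleft (by omega) (by omega) (by omega)
        ((adj_congr H (Fin.ext hsa) (Fin.ext hfa)).1 hadj.symm)

lemma path_reach {k : ℕ} (H : SimpleGraph (Fin (k + 2))) :
    ∀ (d a : ℕ) (h : a + d < k + 2),
    (∀ i (hi1 : a ≤ i) (hi2 : i < a + d),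
      H.Adj ⟨i, by omega⟩ ⟨i + 1, by omega⟩) →
    H.Reachable ⟨a, by omega⟩ ⟨a + d, h⟩ := by
  intro d
  induction d with
  | zero => intro a h _; exact SimpleGraph.Reachable.refl _
  | succ d ih =>
      intro a h hadj
      have h' : a + d < k + 2 := by omega
      have r1 := ih a h' (fun i hi1 hi2 => hadj i hi1 (by omega))
      exact r1.trans (hadj (a + d) (by omega) (by omega)).reachable

lemma tree_good {k : ℕ} {T : SimpleGraph (Fin (k + 2))} (hle : T ≤ fanGraph (k + 2))
    (htree : T.IsTree) : GoodP (cS k (gRead k T)) (cB k (gRead k T)) (k + 1) := by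
  intro a b ha hab hbm hbl hBb hmid
  refine cntS_one_of _ _ _ ?_ ?_
  · -- existence of a spoke in the block
    by_contra hne
    push_neg at hne
    have hnospoke : ∀ (l : ℕ) (hl : l < k + 2), a ≤ l → l ≤ b → ¬T.Adj 0 ⟨l, hl⟩ := by
      intro l hl h1 h2 hadj
      have hSl : cS k (gRead k T) l = true := (gRead_S k T l (by omega) (by omega) hl).2 hadj
      have := hne l h1 (by omega)
      rw [hSl] at this
      exact this rfl
    have hnc := no_cross T hle a b ha hab hbm hnospoke ?_ ?_ 0
      (by have h0 : ((0 : Fin (k + 2)) : ℕ) = 0 := rfl; omega) a le_rfl hab (by omega)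
    · exact hnc (htree.isConnected.preconnected 0 ⟨a, by omega⟩)
    · intro h2 hl1 hl2 hadj
      have hBtrue : cB k (gRead k T) (a - 1) = true :=
        (gRead_B k T (a - 1) (by omega) (by omega) hl1 (by omega)).2
          ((adj_congr T rfl (fin_eq _ _ (by omega))).1 hadj)
      rw [hbl h2] at hBtrue
      exact Bool.false_ne_true hBtrue
    · intro hr1 hr2 hadj
      have hBtrue : cB k (gRead k T) b = true :=
        (gRead_B k T b (by omega) (by omega) hr1 hr2).2 hadj
      rw [hBb] at hBtrue
      exact Bool.false_ne_true hBtrue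
  · -- uniqueness
    have haux : ∀ i j, a ≤ i → i < a + (b + 1 - a) → a ≤ j → j < a + (b + 1 - a) →
        cS k (gRead k T) i = true → cS k (gRead k T) j = true → i < j → False := by
      intro i j hi1 hi2 hj1 hj2 hSi hSj hij
      have hib : i ≤ b := by omega
      have hjb : j ≤ b := by omega
      have hadji : T.Adj 0 ⟨i, by omega⟩ := (gRead_S k T i (by omega) (by omega) (by omega)).1 hSi
      have hadjj : T.Adj 0 ⟨j, by omega⟩ := (gRead_S k T j (by omega) (by omega) (by omega)).1 hSj
      have hbr := (SimpleGraph.isAcyclic_iff_forall_adj_isBridge.1 htree.2) hadji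
      rw [SimpleGraph.isBridge_iff] at hbr
      have hnr := hbr
      set T' := T \ SimpleGraph.fromEdgeSet {s((0 : Fin (k + 2)), (⟨i, by omega⟩ : Fin (k + 2)))}
        with hT'def
      have hadjj' : T'.Adj 0 ⟨j, by omega⟩ := by
        rw [hT'def, SimpleGraph.sdiff_adj]
        refine ⟨hadjj, ?_⟩
        rw [SimpleGraph.fromEdgeSet_adj]
        rintro ⟨hmem, -⟩
        rw [Set.mem_singleton_iff, Sym2.eq_iff] at hmem
        rcases hmem with ⟨-, h2⟩ | ⟨h1, -⟩
        · have := congrArg Fin.val h2; simp at this; try omega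
        · have := congrArg Fin.val h1; simp at this; try omega
      have hpath : ∀ l (hl1 : i ≤ l) (hl2 : l < i + (j - i)),
          T'.Adj ⟨l, by omega⟩ ⟨l + 1, by omega⟩ := by
        intro l hl1 hl2
        have hBl : cB k (gRead k T) l = true := hmid l (by omega) (by omega)
        have hTadj : T.Adj ⟨l, by omega⟩ ⟨l + 1, by omega⟩ :=
          (gRead_B k T l (by omega) (by omega) (by omega) (by omega)).1 hBl
        rw [hT'def, SimpleGraph.sdiff_adj]
        refine ⟨hTadj, ?_⟩
        rw [SimpleGraph.fromEdgeSet_adj]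
        rintro ⟨hmem, -⟩
        rw [Set.mem_singleton_iff, Sym2.eq_iff] at hmem
        rcases hmem with ⟨h1, -⟩ | ⟨-, h2⟩
        · have := congrArg Fin.val h1; simp at this; try omega
        · have := congrArg Fin.val h2; simp at this; try omega
      have hreach : T'.Reachable ⟨i, by omega⟩ ⟨i + (j - i), by omega⟩ :=
        path_reach T' (j - i) i (by omega) hpath
      have e : (⟨i + (j - i), by omega⟩ : Fin (k + 2)) = ⟨j, by omega⟩ := fin_eq _ _ (by omega)
      rw [e] at hreach
      exact hnr (hadjj'.reachable.trans hreach.symm)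
    intro i j hi1 hi2 hj1 hj2 hSi hSj
    rcases lt_trichotomy i j with h | h | h
    · exact absurd (haux i j hi1 hi2 hj1 hj2 hSi hSj h) (fun f => f)
    · exact h
    · exact absurd (haux j i hj1 hj2 hi1 hi2 hSj hSi h) (fun f => f)

lemma valid_of_tree {k : ℕ} {T : SimpleGraph (Fin (k + 2))} (hle : T ≤ fanGraph (k + 2))
    (htree : T.IsTree) : Valid k (gRead k T) :=
  fold_of_good _ _ _ (cB_top _) (tree_good hle htree)

lemma cG_connected {k : ℕ} {D : (Fin k → Bool × Bool) × Bool}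
    (hgood : GoodP (cS k D) (cB k D) (k + 1)) : (cG k D).Connected := by
  rw [SimpleGraph.connected_iff]
  refine ⟨?_, ⟨0⟩⟩
  have hzero : ∀ v : Fin (k + 2), (cG k D).Reachable 0 v := by
    intro v
    rcases Nat.eq_zero_or_pos (v : ℕ) with h0 | h0
    · have he : v = 0 := Fin.ext h0
      rw [he]
    · obtain ⟨a, b, ha1, hav, hvb, hbk, hbl, hBb, hmid⟩ :=
        find_block (cB k D) (k + 1) (v : ℕ) (cB_top D) h0 (by have := v.isLt; omega)
      have hcnt := hgood a b ha1 (by omega) hbk hbl hBb hmid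
      obtain ⟨i, hi1, hi2, hSi⟩ := cntS_one_exists _ _ _ hcnt
      have hib : i ≤ b := by omega
      have hadj : (cG k D).Adj 0 ⟨i, by omega⟩ :=
        (cG_adj_spoke k D i (by omega) (by omega)).2 hSi
      have hpadj : ∀ l (hl1 : a ≤ l) (hl2 : l < b),
          (cG k D).Adj ⟨l, by omega⟩ ⟨l + 1, by omega⟩ := by
        intro l hl1 hl2
        exact (cG_adj_path k D l (by omega) (by omega) (by omega)).2
          (hmid l (by omega) (by omega))
      have hreach : (cG k D).Reachable ⟨i, by omega⟩ v := by
        rcases le_or_gt i (v : ℕ) with hc | hc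
        · have r := path_reach (cG k D) ((v : ℕ) - i) i (by have := v.isLt; omega)
            (fun l hl1 hl2 => hpadj l (by omega) (by omega))
          have e : (⟨i + ((v : ℕ) - i), by have := v.isLt; omega⟩ : Fin (k + 2))
              = ⟨(v : ℕ), v.isLt⟩ := fin_eq _ _ (by omega)
          rw [e, Fin.eta] at r
          exact r
        · have r := path_reach (cG k D) (i - (v : ℕ)) (v : ℕ) (by omega)
            (fun l hl1 hl2 => hpadj l (by omega) (by omega))
          have e : (⟨(v : ℕ) + (i - (v : ℕ)), by omega⟩ : Fin (k + 2))
              = ⟨i, by omega⟩ := fin_eq _ _ (by omega)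
          rw [e] at r
          have r' := r.symm
          rw [show (⟨(v : ℕ), by omega⟩ : Fin (k + 2)) = v from Fin.eta v v.isLt] at r'
          exact r'
      exact hadj.reachable.trans hreach
  intro u v
  exact (hzero u).symm.trans (hzero v)

lemma spoke_bridge {k : ℕ} {D : (Fin k → Bool × Bool) × Bool}
    (hgood : GoodP (cS k D) (cB k D) (k + 1)) (j : ℕ) (h1 : 1 ≤ j) (hj : j < k + 2)
    (hS : cS k D j = true) (u v : Fin (k + 2)) (hu : (u : ℕ) = 0) (hv : (v : ℕ) = j) :
    (cG k D).IsBridge s(u, v) := by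
  have hu' : u = 0 := Fin.ext hu
  have hv' : v = ⟨j, hj⟩ := Fin.ext hv
  subst hu' hv'
  rw [SimpleGraph.isBridge_iff]
  have _hadj0 := (cG_adj_spoke k D j h1 hj).2 hS
  have hjb : j ≤ k + 1 := (cS_bounds hS).2
  obtain ⟨a, b, ha1, haj, hjb', hbk, hbl, hBb, hmid⟩ :=
    find_block (cB k D) (k + 1) j (cB_top D) h1 hjb
  have hcnt := hgood a b ha1 (by omega) hbk hbl hBb hmid
  have huniq := cntS_one_unique _ _ _ hcnt
  set T' := cG k D \ SimpleGraph.fromEdgeSet {s((0 : Fin (k + 2)), (⟨j, hj⟩ : Fin (k + 2)))}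
    with hT'def
  have hT'le : T' ≤ fanGraph (k + 2) := le_trans sdiff_le (cG_le k D)
  refine no_cross T' hT'le a b ha1 (by omega) hbk ?_ ?_ ?_ 0
    (by have h00 : ((0 : Fin (k + 2)) : ℕ) = 0 := rfl; omega) j haj hjb' hj
  · intro l hl hl1 hl2 hadj'
    rw [hT'def, SimpleGraph.sdiff_adj] at hadj'
    obtain ⟨hcg, hne⟩ := hadj'
    have hSl : cS k D l = true := (cG_adj_spoke k D l (by omega) hl).1 hcg
    have hlj : l = j := huniq l j (by omega) (by omega) (by omega) (by omega) hSl hS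
    subst hlj
    refine hne ?_
    rw [SimpleGraph.fromEdgeSet_adj]
    refine ⟨Set.mem_singleton_iff.2 rfl, ?_⟩
    intro he
    have := congrArg Fin.val he
    simp at this
    omega
  · intro h2 hl1 hl2 hadj'
    rw [hT'def, SimpleGraph.sdiff_adj] at hadj'
    have hBa : cB k D (a - 1) = true := (cG_adj_path k D (a - 1) (by omega) hl1 (by omega)).1
      ((adj_congr _ rfl (fin_eq _ _ (by omega))).1 hadj'.1)
    rw [hbl h2] at hBa
    exact Bool.false_ne_true hBa
  · intro hr1 hr2 hadj'
    rw [hT'def, SimpleGraph.sdiff_adj] at hadj'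
    have hBb' : cB k D b = true := (cG_adj_path k D b (by omega) hr1 hr2).1 hadj'.1
    rw [hBb] at hBb'
    exact Bool.false_ne_true hBb'

lemma path_bridge {k : ℕ} {D : (Fin k → Bool × Bool) × Bool}
    (hgood : GoodP (cS k D) (cB k D) (k + 1)) (j : ℕ) (h1 : 1 ≤ j) (hj : j < k + 2)
    (hj2 : j + 1 < k + 2) (hB : cB k D j = true) (u v : Fin (k + 2)) (hu : (u : ℕ) = j)
    (hv : (v : ℕ) = j + 1) : (cG k D).IsBridge s(u, v) := by
  have hu' : u = ⟨j, hj⟩ := Fin.ext hu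
  have hv' : v = ⟨j + 1, hj2⟩ := Fin.ext hv
  subst hu' hv'
  rw [SimpleGraph.isBridge_iff]
  have _hadj0 := (cG_adj_path k D j h1 hj hj2).2 hB
  have hjk : j ≤ k := (cB_bounds hB).2
  obtain ⟨a, b, ha1, haj, hjb', hbk, hbl, hBb, hmid⟩ :=
    find_block (cB k D) (k + 1) j (cB_top D) h1 (by omega)
  have hjb2 : j + 1 ≤ b := by
    rcases Nat.eq_or_lt_of_le hjb' with h | h
    · exfalso
      rw [← h] at hBb
      rw [hBb] at hB
      exact Bool.false_ne_true hB
    · omega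
  have hcnt := hgood a b ha1 (by omega) hbk hbl hBb hmid
  have huniq := cntS_one_unique _ _ _ hcnt
  obtain ⟨i0, hi01, hi02, hSi0⟩ := cntS_one_exists _ _ _ hcnt
  set T' := cG k D \
      SimpleGraph.fromEdgeSet {s((⟨j, hj⟩ : Fin (k + 2)), (⟨j + 1, hj2⟩ : Fin (k + 2)))}
    with hT'def
  have hT'le : T' ≤ fanGraph (k + 2) := le_trans sdiff_le (cG_le k D)
  have hdel : ∀ (p1 : j < k + 2) (p2 : j + 1 < k + 2), ¬T'.Adj ⟨j, p1⟩ ⟨j + 1, p2⟩ := by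
    intro p1 p2 hadj'
    rw [hT'def, SimpleGraph.sdiff_adj] at hadj'
    refine hadj'.2 ?_
    rw [SimpleGraph.fromEdgeSet_adj]
    refine ⟨Set.mem_singleton_iff.2 rfl, ?_⟩
    intro he
    have := congrArg Fin.val he
    simp at this
  rcases Nat.lt_or_ge i0 (j + 1) with hc | hc
  · refine no_cross T' hT'le (j + 1) b (by omega) hjb2 hbk ?_ ?_ ?_ ⟨j, hj⟩
      (by have hjv : ((⟨j, hj⟩ : Fin (k + 2)) : ℕ) = j := rfl; omega) (j + 1) le_rfl hjb2 hj2
    · intro l hl hl1 hl2 hadj'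
      rw [hT'def, SimpleGraph.sdiff_adj] at hadj'
      have hSl : cS k D l = true := (cG_adj_spoke k D l (by omega) hl).1 hadj'.1
      have : l = i0 := huniq l i0 (by omega) (by omega) (by omega) (by omega) hSl hSi0
      omega
    · intro h2 hl1 hl2 hadj'
      exact hdel hj hj2 ((adj_congr _ (fin_eq _ _ (by omega)) rfl).1 hadj')
    · intro hr1 hr2 hadj'
      rw [hT'def, SimpleGraph.sdiff_adj] at hadj'
      have hBb' : cB k D b = true := (cG_adj_path k D b (by omega) hr1 hr2).1 hadj'.1
      rw [hBb] at hBb'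
      exact Bool.false_ne_true hBb'
  · intro hr
    refine no_cross T' hT'le a j ha1 haj (by omega) ?_ ?_ ?_ ⟨j + 1, hj2⟩
      (by have hjv : ((⟨j + 1, hj2⟩ : Fin (k + 2)) : ℕ) = j + 1 := rfl; omega)
      j haj le_rfl hj hr.symm
    · intro l hl hl1 hl2 hadj'
      rw [hT'def, SimpleGraph.sdiff_adj] at hadj'
      have hSl : cS k D l = true := (cG_adj_spoke k D l (by omega) hl).1 hadj'.1
      have : l = i0 := huniq l i0 (by omega) (by omega) (by omega) (by omega) hSl hSi0
      omega
    · intro h2 hl1 hl2 hadj'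
      rw [hT'def, SimpleGraph.sdiff_adj] at hadj'
      have hBa : cB k D (a - 1) = true := (cG_adj_path k D (a - 1) (by omega) hl1 (by omega)).1
        ((adj_congr _ rfl (fin_eq _ _ (by omega))).1 hadj'.1)
      rw [hbl h2] at hBa
      exact Bool.false_ne_true hBa
    · intro hr1 hr2 hadj'
      exact hdel hr1 hr2 hadj'

lemma tree_of_valid {k : ℕ} (D : (Fin k → Bool × Bool) × Bool) (hv : Valid k D) :
    (cG k D).IsTree := by
  have hv' : List.foldl stp (some false) (seg (cS k D) (cB k D) 1 (k + 1)) = some false := hv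
  have hgood : GoodP (cS k D) (cB k D) (k + 1) :=
    good_of_fold _ _ _ (by rw [hv']; simp)
  constructor
  · exact cG_connected hgood
  · rw [SimpleGraph.isAcyclic_iff_forall_adj_isBridge]
    intro u v hadj
    rcases cG_adj_cases hadj with ⟨h0, hb1, hS⟩ | ⟨h0, hb1, hS⟩ | ⟨he, hb1, hB⟩ | ⟨he, hb1, hB⟩
    · exact spoke_bridge hgood (v : ℕ) hb1 v.isLt hS u v h0 rfl
    · rw [Sym2.eq_swap]
      exact spoke_bridge hgood (u : ℕ) hb1 u.isLt hS v u h0 rfl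
    · exact path_bridge hgood (u : ℕ) hb1 u.isLt (by have := v.isLt; omega) hB u v rfl he.symm
    · rw [Sym2.eq_swap]
      exact path_bridge hgood (v : ℕ) hb1 v.isLt (by have := u.isLt; omega) hB v u rfl he.symm

lemma gRead_cG {k : ℕ} {T : SimpleGraph (Fin (k + 2))} (hT : T ≤ fanGraph (k + 2)) :
    cG k (gRead k T) = T := by
  ext u v
  constructor
  · intro h
    rcases cG_adj_cases h with ⟨h0, hb1, hS⟩ | ⟨h0, hb1, hS⟩ | ⟨he, hb1, hB⟩ | ⟨he, hb1, hB⟩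
    · have hb2 : (v : ℕ) ≤ k + 1 := (cS_bounds hS).2
      have hadj := (gRead_S k T (v : ℕ) hb1 hb2 v.isLt).1 hS
      have e1 : (0 : Fin (k + 2)) = u := (Fin.ext h0).symm
      exact (adj_congr T e1 (Fin.eta v v.isLt)).1 hadj
    · have hb2 : (u : ℕ) ≤ k + 1 := (cS_bounds hS).2
      have hadj := (gRead_S k T (u : ℕ) hb1 hb2 u.isLt).1 hS
      have e1 : (0 : Fin (k + 2)) = v := (Fin.ext h0).symm
      exact ((adj_congr T e1 (Fin.eta u u.isLt)).1 hadj).symm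
    · have hb2 : (u : ℕ) ≤ k := (cB_bounds hB).2
      have hadj := (gRead_B k T (u : ℕ) hb1 hb2 u.isLt (by have := v.isLt; omega)).1 hB
      have e2 : (⟨(u : ℕ) + 1, by have := v.isLt; omega⟩ : Fin (k + 2)) = v :=
        Fin.ext (show (u : ℕ) + 1 = (v : ℕ) by omega)
      exact (adj_congr T (Fin.eta u u.isLt) e2).1 hadj
    · have hb2 : (v : ℕ) ≤ k := (cB_bounds hB).2
      have hadj := (gRead_B k T (v : ℕ) hb1 hb2 v.isLt (by have := u.isLt; omega)).1 hB
      have e2 : (⟨(v : ℕ) + 1, by have := u.isLt; omega⟩ : Fin (k + 2)) = u :=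
        Fin.ext (show (v : ℕ) + 1 = (u : ℕ) by omega)
      exact ((adj_congr T (Fin.eta v v.isLt) e2).1 hadj).symm
  · intro h
    have hfan := hT h
    rw [fan_adj] at hfan
    obtain ⟨hne, hsh⟩ := hfan
    have hnv : (u : ℕ) ≠ (v : ℕ) := fun he => hne (Fin.ext he)
    by_cases hu0 : (u : ℕ) = 0
    · have e1 : u = 0 := Fin.ext hu0
      have hS : cS k (gRead k T) (v : ℕ) = true :=
        (gRead_S k T (v : ℕ) (by omega) (by have := v.isLt; omega) v.isLt).2
          ((adj_congr T e1 (Fin.eta v v.isLt).symm).1 h)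
      exact (adj_congr _ e1.symm (Fin.eta v v.isLt)).1
        ((cG_adj_spoke k (gRead k T) (v : ℕ) (by omega) v.isLt).2 hS)
    · by_cases hv0 : (v : ℕ) = 0
      · have e1 : v = 0 := Fin.ext hv0
        have hS : cS k (gRead k T) (u : ℕ) = true :=
          (gRead_S k T (u : ℕ) (by omega) (by have := u.isLt; omega) u.isLt).2
            ((adj_congr T e1 (Fin.eta u u.isLt).symm).1 h.symm)
        exact ((adj_congr _ e1.symm (Fin.eta u u.isLt)).1
          ((cG_adj_spoke k (gRead k T) (u : ℕ) (by omega) u.isLt).2 hS)).symm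
      · rcases hsh with h0 | h0 | h0 | h0
        · omega
        · omega
        · have hvlt := v.isLt
          have e2 : v = ⟨(u : ℕ) + 1, by omega⟩ := Fin.ext (show (v : ℕ) = (u : ℕ) + 1 by omega)
          have hB : cB k (gRead k T) (u : ℕ) = true :=
            (gRead_B k T (u : ℕ) (by omega) (by omega) u.isLt (by omega)).2
              ((adj_congr T (Fin.eta u u.isLt).symm e2).1 h)
          exact (adj_congr _ (Fin.eta u u.isLt) e2.symm).1
            ((cG_adj_path k (gRead k T) (u : ℕ) (by omega) u.isLt (by omega)).2 hB)
        · have hult := u.isLt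
          have e2 : u = ⟨(v : ℕ) + 1, by omega⟩ := Fin.ext (show (u : ℕ) = (v : ℕ) + 1 by omega)
          have hB : cB k (gRead k T) (v : ℕ) = true :=
            (gRead_B k T (v : ℕ) (by omega) (by omega) v.isLt (by omega)).2
              ((adj_congr T (Fin.eta v v.isLt).symm e2).1 h.symm)
          exact ((adj_congr _ (Fin.eta v v.isLt) e2.symm).1
            ((cG_adj_path k (gRead k T) (v : ℕ) (by omega) v.isLt (by omega)).2 hB)).symm

lemma cG_gRead {k : ℕ} (D : (Fin k → Bool × Bool) × Bool) : gRead k (cG k D) = D := by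
  have hspoke : ∀ (j : ℕ) (h1 : 1 ≤ j) (hj : j < k + 2),
      decide ((cG k D).Adj 0 ⟨j, hj⟩) = cS k D j := by
    intro j h1 hj
    cases hb : cS k D j
    · refine decide_eq_false ?_
      intro hadj
      have := (cG_adj_spoke k D j h1 hj).1 hadj
      rw [hb] at this
      exact Bool.false_ne_true this
    · exact decide_eq_true ((cG_adj_spoke k D j h1 hj).2 hb)
  have hpath : ∀ (j : ℕ) (h1 : 1 ≤ j) (hj : j < k + 2) (hj2 : j + 1 < k + 2),
      decide ((cG k D).Adj ⟨j, hj⟩ ⟨j + 1, hj2⟩) = cB k D j := by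
    intro j h1 hj hj2
    cases hb : cB k D j
    · refine decide_eq_false ?_
      intro hadj
      have := (cG_adj_path k D j h1 hj hj2).1 hadj
      rw [hb] at this
      exact Bool.false_ne_true this
    · exact decide_eq_true ((cG_adj_path k D j h1 hj hj2).2 hb)
  unfold gRead
  refine Prod.ext ?_ ?_
  · funext i
    have hik := i.isLt
    show (decide ((cG k D).Adj 0 ⟨(i : ℕ) + 1, by omega⟩),
          decide ((cG k D).Adj ⟨(i : ℕ) + 1, by omega⟩ ⟨(i : ℕ) + 2, by omega⟩)) = D.1 i
    refine Prod.ext ?_ ?_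
    · show decide ((cG k D).Adj 0 ⟨(i : ℕ) + 1, by omega⟩) = (D.1 i).1
      rw [hspoke ((i : ℕ) + 1) (by omega) (by omega)]
      unfold cS
      rw [dif_pos ⟨by omega, by omega⟩]
      exact congrArg (fun x => (D.1 x).1) (Fin.ext (show (i : ℕ) + 1 - 1 = (i : ℕ) by omega))
    · show decide ((cG k D).Adj ⟨(i : ℕ) + 1, by omega⟩ ⟨(i : ℕ) + 2, by omega⟩) = (D.1 i).2
      rw [hpath ((i : ℕ) + 1) (by omega) (by omega) (by omega)]
      unfold cB
      rw [dif_pos ⟨by omega, by omega⟩]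
      exact congrArg (fun x => (D.1 x).2) (Fin.ext (show (i : ℕ) + 1 - 1 = (i : ℕ) by omega))
  · show decide ((cG k D).Adj 0 ⟨k + 1, by omega⟩) = D.2
    rw [hspoke (k + 1) (by omega) (by omega)]
    unfold cS
    rw [dif_neg (by omega), if_pos rfl]

noncomputable def treeEquiv (k : ℕ) :
    {T : SimpleGraph (Fin (k + 2)) // IsSpanningTree (fanGraph (k + 2)) T} ≃
      {D : (Fin k → Bool × Bool) × Bool // Valid k D} where
  toFun := fun T => ⟨gRead k T.1, valid_of_tree T.2.1 T.2.2⟩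
  invFun := fun D => ⟨cG k D.1, cG_le k D.1, tree_of_valid D.1 D.2⟩
  left_inv := fun T => Subtype.ext (gRead_cG T.2.1)
  right_inv := fun D => Subtype.ext (cG_gRead D.1)

lemma seg_eq_ofFn {k : ℕ} (D : (Fin k → Bool × Bool) × Bool) :
    seg (cS k D) (cB k D) 1 (k + 1) = List.ofFn D.1 ++ [(D.2, false)] := by
  have h1 : seg (cS k D) (cB k D) 1 (k + 1)
      = seg (cS k D) (cB k D) 1 k ++ seg (cS k D) (cB k D) (1 + k) 1 := seg_append _ _ _ _ _
  rw [h1, seg_one]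
  congr 1
  · apply List.ext_getElem
    · simp [seg]
    · intro i hi1 hi2
      have hik : i < k := by simpa using hi2
      simp only [seg, List.getElem_map, List.getElem_range, List.getElem_ofFn]
      refine Prod.ext ?_ ?_
      · show cS k D (1 + i) = (D.1 ⟨i, _⟩).1
        unfold cS
        rw [dif_pos ⟨by omega, by omega⟩]
        exact congrArg (fun x => (D.1 x).1) (Fin.ext (show 1 + i - 1 = i by omega))
      · show cB k D (1 + i) = (D.1 ⟨i, _⟩).2
        unfold cB
        rw [dif_pos ⟨by omega, by omega⟩]
        exact congrArg (fun x => (D.1 x).2) (Fin.ext (show 1 + i - 1 = i by omega))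
  · have e1 : cS k D (1 + k) = D.2 := by
      unfold cS
      rw [dif_neg (by omega), if_pos (by omega)]
    have e2 : cB k D (1 + k) = false := by
      unfold cB
      rw [dif_neg (by omega)]
    rw [e1, e2]

lemma valid_count (k : ℕ) :
    Nat.card {D : (Fin k → Bool × Bool) × Bool // Valid k D} = Nat.fib (2 * k + 2) := by
  have hvb : ∀ D : (Fin k → Bool × Bool) × Bool, Valid k D ↔
      stp (List.foldl stp (some false) (List.ofFn D.1)) (D.2, false) = some false := by
    intro D
    unfold Valid
    rw [seg_eq_ofFn, List.foldl_append, List.foldl_cons, List.foldl_nil]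
  have he : {D : (Fin k → Bool × Bool) × Bool // Valid k D} ≃
      (s : Bool) × {c : Fin k → Bool × Bool //
        stp (List.foldl stp (some false) (List.ofFn c)) (s, false) = some false} := {
    toFun := fun D => ⟨D.1.2, D.1.1, (hvb D.1).1 D.2⟩
    invFun := fun p => ⟨(p.2.1, p.1), (hvb _).2 p.2.2⟩
    left_inv := fun D => rfl
    right_inv := fun p => rfl }
  rw [Nat.card_congr he, natCard_sigma, Fintype.sum_bool]
  have h1 : Nat.card {c : Fin k → Bool × Bool //
      stp (List.foldl stp (some false) (List.ofFn c)) (true, false) = some false}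
      = Nat.fib (2 * k + 1) := by
    have hiff : ∀ c : Fin k → Bool × Bool,
        (stp (List.foldl stp (some false) (List.ofFn c)) (true, false) = some false) ↔
        (List.foldl stp (some false) (List.ofFn c) = some false) := by
      intro c
      cases hst : List.foldl stp (some false) (List.ofFn c) with
      | none => simp [stp]
      | some q => cases q <;> simp [stp]
    rw [Nat.card_congr (Equiv.subtypeEquivRight hiff), cardW]
    exact (Wc_vals k).1
  have h2 : Nat.card {c : Fin k → Bool × Bool //
      stp (List.foldl stp (some false) (List.ofFn c)) (false, false) = some false}
      = Nat.fib (2 * k) := by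
    have hiff : ∀ c : Fin k → Bool × Bool,
        (stp (List.foldl stp (some false) (List.ofFn c)) (false, false) = some false) ↔
        (List.foldl stp (some false) (List.ofFn c) = some true) := by
      intro c
      cases hst : List.foldl stp (some false) (List.ofFn c) with
      | none => simp [stp]
      | some q => cases q <;> simp [stp]
    rw [Nat.card_congr (Equiv.subtypeEquivRight hiff), cardW]
    exact (Wc_vals k).2.1
  rw [h1, h2]
  have := Nat.fib_add_two (n := 2 * k)
  omega

theorem fan_spanning_tree_count (n : ℕ) (hn : 2 ≤ n) :
    numSpanningTrees n = Nat.fib (2 * (n - 1)) := by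
  obtain ⟨k, rfl⟩ : ∃ k, n = k + 2 := ⟨n - 2, by omega⟩
  unfold numSpanningTrees
  rw [Nat.card_congr (treeEquiv k), valid_count k]
  have e : 2 * (k + 2 - 1) = 2 * k + 2 := by omega
  rw [e]
end

section
/- For n ≥ 3, the spanning trees of the fan graph F_n that contain the edge v_n v_{n−1} but not the edge v_n v_∞ are in bijection with the spanning trees of F_{n−1}, via deleting the vertex v_n (and the edge v_n v_{n−1}). -/
open SimpleGraph

namespace FanAux

open SimpleGraph Walk

variable {V V' : Type*} {f : V' ↪ V} {G : SimpleGraph V}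

/-- Pull back a walk whose support lies in the range of `f`. -/
lemma pull {x y : V} (p : G.Walk x y) :
    ∀ (_ : ∀ z ∈ p.support, ∃ a, f a = z) (a b : V') (ha : f a = x) (hb : f b = y),
      ∃ q : (G.comap f).Walk a b,
        q.map (SimpleGraph.Embedding.comap f G).toHom = p.copy ha.symm hb.symm := by
  induction p with
  | nil =>
    rintro hs a b ha hb
    subst hb
    obtain rfl := f.injective ha
    exact ⟨Walk.nil, by simp⟩
  | @cons x u y h q ih =>
    rintro hs a b ha hb
    subst ha; subst hb
    obtain ⟨c, hc⟩ := hs u (by simp)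
    subst hc
    obtain ⟨q', hq'⟩ := ih (fun z hz => hs z (by simp [hz])) c b rfl rfl
    refine ⟨Walk.cons (by simpa using h) q', ?_⟩
    simp only [Walk.map_cons, Walk.copy_rfl_rfl] at hq' ⊢
    rw [hq']; rfl

lemma support_adj : ∀ {x y : V} (p : G.Walk x y), ¬ p.Nil → ∀ z ∈ p.support, ∃ t, G.Adj z t := by
  intro x y p
  induction p with
  | nil => intro hp; simp at hp
  | @cons x u y h q ih =>
    intro _ z hz
    rcases (by simpa using hz : z = x ∨ z ∈ q.support) with rfl | hz'
    · exact ⟨_, h⟩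
    · by_cases hq : q.Nil
      · rw [Walk.nil_iff_support_eq] at hq
        rw [hq] at hz'
        simp only [List.mem_singleton] at hz'
        subst hz'
        exact ⟨_, h.symm⟩
      · exact ih hq z hz'

lemma leaf_not_mem_cycle {v w : V} (hleaf : ∀ x, G.Adj v x → x = w) {x : V}
    {c : G.Walk x x} (hc : c.IsCycle) (hv : v ∈ c.support) : False := by
  classical
  have hc' := hc.rotate hv
  cases hcc : c.rotate v hv with
  | nil => rw [hcc] at hc'; exact Walk.IsCycle.not_of_nil hc'
  | @cons _ u _ h p =>
    rw [hcc] at hc'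
    obtain rfl := hleaf _ h
    rw [Walk.cons_isCycle_iff] at hc'
    obtain ⟨hp, hev⟩ := hc'
    apply hev
    have hnp : ¬ p.reverse.Nil := Walk.not_nil_of_ne (fun hvw => G.irrefl (hvw ▸ h))
    obtain ⟨u', hadj, q2, hq2⟩ := Walk.not_nil_iff.mp hnp
    obtain rfl := hleaf _ hadj
    have hmem : s(v, u') ∈ p.reverse.edges := by rw [hq2]; simp
    simpa [Walk.edges_reverse] using hmem

lemma comap_isTree {v w : V} (hG : G.IsTree)
    (hleaf : ∀ x, G.Adj v x → x = w)
    (hv : ∀ a : V', f a ≠ v) (hsurj : ∀ x : V, x ≠ v → ∃ a, f a = x)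
    (hne : Nonempty V') : (G.comap f).IsTree := by
  classical
  constructor
  · haveI := hne
    constructor
    intro a b
    obtain ⟨p0⟩ := hG.isConnected.preconnected (f a) (f b)
    set p : G.Walk (f a) (f b) := p0.toPath.1 with hpdef
    have hpath : p.IsPath := p0.toPath.2
    have hva : f a ≠ v := hv a
    have hvb : f b ≠ v := hv b
    have hvp : v ∉ p.support := by
      intro hvp
      have hspec := Walk.take_spec p hvp
      have hnodup : ((p.takeUntil v hvp).append (p.dropUntil v hvp)).support.Nodup := by
        rw [hspec]; exact hpath.support_nodup
      rw [Walk.support_append, List.nodup_append] at hnodup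
      have hrnil : ¬ (p.dropUntil v hvp).Nil := Walk.not_nil_of_ne (Ne.symm hvb)
      obtain ⟨u, hadj, r2, hr2⟩ := Walk.not_nil_iff.mp hrnil
      have hw_tail : w ∈ (p.dropUntil v hvp).support.tail := by
        rw [hr2]
        simp only [Walk.support_cons, List.tail_cons]
        exact (hleaf _ hadj) ▸ r2.start_mem_support
      have hqnil : ¬ (p.takeUntil v hvp).reverse.Nil := Walk.not_nil_of_ne (Ne.symm hva)
      obtain ⟨u', hadj', q2, hq2⟩ := Walk.not_nil_iff.mp hqnil
      have hw_q : w ∈ (p.takeUntil v hvp).support := by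
        have hh : w ∈ (p.takeUntil v hvp).reverse.support := by
          rw [hq2]
          simp only [Walk.support_cons, List.mem_cons]
          exact Or.inr ((hleaf _ hadj') ▸ q2.start_mem_support)
        simpa [Walk.support_reverse] using hh
      exact hnodup.2.2 w hw_q w hw_tail rfl
    obtain ⟨q, -⟩ := pull p (fun z hz => hsurj z (fun h => hvp (h ▸ hz))) a b rfl rfl
    exact ⟨q⟩
  · intro a q hq
    exact hG.IsAcyclic (q.map (SimpleGraph.Embedding.comap f G).toHom)
      (hq.map (fun _ _ hh => f.injective hh))

lemma map_isAcyclic {T' : SimpleGraph V'} (hT : T'.IsAcyclic) : (T'.map f).IsAcyclic := by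
  intro x c hc
  have hnn : ¬ c.Nil := by
    rw [Walk.not_nil_iff_lt_length]
    have := hc.three_le_length; omega
  have hs : ∀ z ∈ c.support, ∃ a, f a = z := by
    intro z hz
    obtain ⟨t, ht⟩ := support_adj c hnn z hz
    rw [SimpleGraph.map_adj] at ht
    obtain ⟨a, b, _, rfl, _⟩ := ht
    exact ⟨a, rfl⟩
  obtain ⟨a, ha⟩ := hs x c.start_mem_support
  subst ha
  obtain ⟨q, hq⟩ := pull c hs a a rfl rfl
  rw [Walk.copy_rfl_rfl] at hq
  rw [← hq] at hc
  have hqc : q.IsCycle :=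
    (Walk.map_isCycle_iff_of_injective (fun _ _ hh => f.injective hh)).mp hc
  have heq : (T'.map f).comap f = T' := comap_map_eq f T'
  rw [← heq] at hT
  exact hT q hqc

lemma sup_edge_isTree {T' : SimpleGraph V'} {v w : V} {w' : V'} (hT' : T'.IsTree)
    (hw : f w' = w) (hvw : v ≠ w) (hv : ∀ a, f a ≠ v)
    (hsurj : ∀ x : V, x ≠ v → ∃ a, f a = x) :
    ((T'.map f) ⊔ SimpleGraph.edge v w).IsTree := by
  have hAdjvw : ((T'.map f) ⊔ SimpleGraph.edge v w).Adj v w := by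
    rw [sup_adj, edge_adj]; exact Or.inr ⟨Or.inl ⟨rfl, rfl⟩, hvw⟩
  have hleafT : ∀ x, ((T'.map f) ⊔ SimpleGraph.edge v w).Adj v x → x = w := by
    intro x hx
    rw [sup_adj] at hx
    rcases hx with h | h
    · rw [SimpleGraph.map_adj] at h
      obtain ⟨a, b, _, hfa, _⟩ := h
      exact absurd hfa (hv a)
    · rw [edge_adj] at h
      rcases h.1 with ⟨_, rfl⟩ | ⟨hvv, _⟩
      · rfl
      · exact absurd hvv hvw
  let hhom : T' →g (T'.map f) ⊔ SimpleGraph.edge v w :=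
    ⟨f, fun {a b} h => by rw [sup_adj]; exact Or.inl (SimpleGraph.map_adj_apply.mpr h)⟩
  constructor
  · haveI : Nonempty V := ⟨v⟩
    constructor
    have key : ∀ z : V, ((T'.map f) ⊔ SimpleGraph.edge v w).Reachable z v := by
      intro z
      by_cases hz : z = v
      · subst hz; exact Reachable.refl _
      · obtain ⟨a, rfl⟩ := hsurj z hz
        have h1 := (hT'.isConnected.preconnected a w').map hhom
        have h2 : ((T'.map f) ⊔ SimpleGraph.edge v w).Reachable (f w') v := by
          rw [hw]; exact hAdjvw.symm.reachable
        exact h1.trans h2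
    intro x y
    exact (key x).trans (key y).symm
  · intro x c hc
    have hvsup : v ∉ c.support := fun hvs => leaf_not_mem_cycle hleafT hc hvs
    have hce : ∀ e ∈ c.edges, e ∈ (T'.map f).edgeSet := by
      intro e he
      have heT := c.edges_subset_edgeSet he
      induction e with
      | _ x1 y1 =>
        rw [SimpleGraph.mem_edgeSet, sup_adj] at heT
        rcases heT with h | h
        · exact h
        · exfalso
          rw [edge_adj] at h
          rcases h.1 with ⟨rfl, _⟩ | ⟨_, rfl⟩
          · exact hvsup (Walk.fst_mem_support_of_mem_edges c he)
          · exact hvsup (Walk.snd_mem_support_of_mem_edges c he)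
    exact map_isAcyclic hT'.IsAcyclic (c.transfer _ hce) (hc.transfer hce)

lemma comap_sup_edge {T' : SimpleGraph V'} {v w : V} (hv : ∀ a, f a ≠ v) :
    ((T'.map f) ⊔ SimpleGraph.edge v w).comap f = T' := by
  ext a b
  simp only [comap_adj, sup_adj, edge_adj]
  constructor
  · rintro (h | ⟨⟨h1, _⟩ | ⟨_, h2⟩, _⟩)
    · exact SimpleGraph.map_adj_apply.mp h
    · exact absurd h1 (hv a)
    · exact absurd h2 (hv b)
  · intro h
    exact Or.inl (SimpleGraph.map_adj_apply.mpr h)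

lemma map_comap_sup_edge {T : SimpleGraph V} {v w : V} (hAdj : T.Adj v w)
    (hleafT : ∀ x, T.Adj v x → x = w)
    (hsurj : ∀ x : V, x ≠ v → ∃ a, f a = x) :
    ((T.comap f).map f) ⊔ SimpleGraph.edge v w = T := by
  ext x y
  simp only [sup_adj, SimpleGraph.map_adj, comap_adj, edge_adj]
  constructor
  · rintro (⟨a, b, hab, rfl, rfl⟩ | ⟨⟨rfl, rfl⟩ | ⟨rfl, rfl⟩, _⟩)
    · exact hab
    · exact hAdj
    · exact hAdj.symm
  · intro h
    by_cases hx : x = v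
    · subst hx
      exact Or.inr ⟨Or.inl ⟨rfl, hleafT _ h⟩, h.ne⟩
    · by_cases hy : y = v
      · subst hy
        exact Or.inr ⟨Or.inr ⟨hleafT _ h.symm, rfl⟩, h.ne⟩
      · obtain ⟨a, rfl⟩ := hsurj x hx
        obtain ⟨b, rfl⟩ := hsurj y hy
        exact Or.inl ⟨a, b, h, rfl, rfl⟩



theorem main_aux (n : ℕ) (hn : 3 ≤ n) (v w z : Fin n) (w' : Fin (n - 1))
    (f : Fin (n - 1) ↪ Fin n)
    (hv : (v : ℕ) = n - 1) (hw : (w : ℕ) = n - 2) (hz : (z : ℕ) = 0)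
    (hf : ∀ a : Fin (n - 1), (f a : ℕ) = (a : ℕ)) :
    ∃ e : {T : SimpleGraph (Fin n) // IsSpanningTree (fanGraph n) T ∧
            T.Adj v w ∧ ¬ T.Adj v z} ≃
          {T' : SimpleGraph (Fin (n - 1)) // IsSpanningTree (fanGraph (n - 1)) T'},
      ∀ T, (e T : SimpleGraph (Fin (n - 1))) =
        SimpleGraph.comap f (T : SimpleGraph (Fin n)) := by
  have hn1 : 1 ≤ n - 1 := by omega
  have hw' : ∃ w'' : Fin (n - 1), f w'' = w := by
    refine ⟨⟨n - 2, by omega⟩, Fin.ext ?_⟩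
    rw [hf]; exact hw.symm
  obtain ⟨w', hwfw'⟩ := hw'
  have hvrange : ∀ a : Fin (n - 1), f a ≠ v := by
    intro a h
    have ha := a.isLt
    rw [Fin.ext_iff, hf, hv] at h
    omega
  have hsurj : ∀ x : Fin n, x ≠ v → ∃ a, f a = x := by
    intro x hx
    have hx' : (x : ℕ) ≠ n - 1 := fun h => hx (Fin.ext (h.trans hv.symm))
    have hxlt := x.isLt
    refine ⟨⟨x, by omega⟩, Fin.ext ?_⟩
    rw [hf]
  have hvw : v ≠ w := fun h => by rw [Fin.ext_iff, hv, hw] at h; omega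
  have hwz : w ≠ z := fun h => by rw [Fin.ext_iff, hw, hz] at h; omega
  have hcomapFan : (fanGraph n).comap f = fanGraph (n - 1) := by
    ext a b
    simp only [comap_adj, fanGraph, fromRel_adj, Fin.ext_iff, hf, ne_eq]
  have hfanleaf : ∀ x : Fin n, (fanGraph n).Adj v x → x = z ∨ x = w := by
    intro x h
    have hx := x.isLt
    simp only [fanGraph, fromRel_adj, Fin.ext_iff, hv, hz, hw, ne_eq] at h ⊢
    omega
  have hfanAdjvw : (fanGraph n).Adj v w := by
    simp only [fanGraph, fromRel_adj, Fin.ext_iff, hv, hw, ne_eq]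
    omega
  have fwd : ∀ T : {T : SimpleGraph (Fin n) // IsSpanningTree (fanGraph n) T ∧
            T.Adj v w ∧ ¬ T.Adj v z},
      IsSpanningTree (fanGraph (n - 1)) ((T : SimpleGraph (Fin n)).comap f) := by
    rintro ⟨T, ⟨hle', htree⟩, hvwT, hv0T⟩
    have hleafT : ∀ x, T.Adj v x → x = w := by
      intro x hx
      rcases hfanleaf x (hle' hx) with h0 | hwx
      · exact absurd (h0 ▸ hx) hv0T
      · exact hwx
    constructor
    · rw [← hcomapFan]
      intro a b h
      exact hle' h
    · exact comap_isTree htree hleafT hvrange hsurj ⟨w'⟩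
  have hleafSub : ∀ (T : SimpleGraph (Fin n)), T ≤ fanGraph n → ¬ T.Adj v z →
      ∀ x, T.Adj v x → x = w := by
    intro T hle' hv0T x hx
    rcases hfanleaf x (hle' hx) with h0 | hwx
    · exact absurd (h0 ▸ hx) hv0T
    · exact hwx
  have bwd : ∀ T' : {T' : SimpleGraph (Fin (n - 1)) // IsSpanningTree (fanGraph (n - 1)) T'},
      IsSpanningTree (fanGraph n) (((T' : SimpleGraph (Fin (n - 1))).map f) ⊔ SimpleGraph.edge v w) ∧
      (((T' : SimpleGraph (Fin (n - 1))).map f) ⊔ SimpleGraph.edge v w).Adj v w ∧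
      ¬ (((T' : SimpleGraph (Fin (n - 1))).map f) ⊔ SimpleGraph.edge v w).Adj v z := by
    rintro ⟨T', hle', htree'⟩
    refine ⟨⟨?_, sup_edge_isTree htree' hwfw' hvw hvrange hsurj⟩, ?_, ?_⟩
    · refine sup_le ?_ ?_
      · rw [SimpleGraph.map_le_iff_le_comap, hcomapFan]
        exact hle'
      · intro a b h
        rw [edge_adj] at h
        rcases h.1 with ⟨rfl, rfl⟩ | ⟨rfl, rfl⟩
        · exact hfanAdjvw
        · exact hfanAdjvw.symm
    · rw [sup_adj, edge_adj]
      exact Or.inr ⟨Or.inl ⟨rfl, rfl⟩, hvw⟩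
    · rw [sup_adj]
      rintro (h | h)
      · rw [SimpleGraph.map_adj] at h
        obtain ⟨a, b, _, hfa, _⟩ := h
        exact hvrange a hfa
      · rw [edge_adj] at h
        rcases h.1 with ⟨_, h2⟩ | ⟨h1, _⟩
        · exact hwz h2.symm
        · exact hvw h1
  refine ⟨⟨fun T => ⟨(T : SimpleGraph (Fin n)).comap f, fwd T⟩,
          fun T' => ⟨((T' : SimpleGraph (Fin (n - 1))).map f) ⊔ SimpleGraph.edge v w,
            (bwd T').1, (bwd T').2.1, (bwd T').2.2⟩, ?_, ?_⟩, fun T => rfl⟩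
  · rintro ⟨T, ⟨hle', htree⟩, hvwT, hv0T⟩
    apply Subtype.ext
    exact map_comap_sup_edge hvwT (hleafSub T hle' hv0T) hsurj
  · rintro ⟨T', hle', htree'⟩
    apply Subtype.ext
    exact comap_sup_edge hvrange

end FanAux

theorem fan_bijection_path_edge (n : ℕ) (hn : 3 ≤ n) :
    ∃ e : {T : SimpleGraph (Fin n) // IsSpanningTree (fanGraph n) T ∧
            T.Adj ⟨n - 1, by omega⟩ ⟨n - 2, by omega⟩ ∧
            ¬ T.Adj ⟨n - 1, by omega⟩ ⟨0, by omega⟩} ≃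
          {T' : SimpleGraph (Fin (n - 1)) // IsSpanningTree (fanGraph (n - 1)) T'},
      ∀ T, (e T : SimpleGraph (Fin (n - 1))) =
        SimpleGraph.comap (Fin.castLE (by omega)) (T : SimpleGraph (Fin n)) := by
  exact FanAux.main_aux n hn ⟨n - 1, by omega⟩ ⟨n - 2, by omega⟩ ⟨0, by omega⟩
    ⟨0, by omega⟩ (Fin.castLEEmb (by omega)) rfl rfl rfl (fun a => rfl)
end

section
/- For all n ≥ 1, the sum over all compositions (c_1, ..., c_k) of n of the product c_1·c_2·⋯·c_k equals the Fibonacci number f_{2n}, where f_1 = f_2 = 1. -/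
open Finset

/-- Split a composition of `n+1` into its first block and the rest. -/
def compSplitEquiv (n : ℕ) : Composition (n + 1) ≃ Σ i : Fin (n + 1), Composition (n - (i : ℕ)) where
  toFun c := by
    have hne : c.blocks ≠ [] := by
      intro h
      have hs := c.blocks_sum
      rw [h] at hs
      simp at hs
    refine ⟨⟨c.blocks.head hne - 1, ?_⟩, ⟨c.blocks.tail, ?_, ?_⟩⟩
    · have h1 : c.blocks.head hne ≤ n + 1 := by
        have hs := c.blocks_sum
        rw [← List.cons_head_tail (l := c.blocks) hne, List.sum_cons] at hs
        omega
      omega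
    · intro i hi
      exact c.blocks_pos (List.mem_of_mem_tail hi)
    · have hpos : 1 ≤ c.blocks.head hne := c.blocks_pos (List.head_mem hne)
      have hs := c.blocks_sum
      rw [← List.cons_head_tail (l := c.blocks) hne, List.sum_cons] at hs
      show c.blocks.tail.sum = n - (c.blocks.head hne - 1)
      omega
  invFun p := ⟨((p.1 : ℕ) + 1) :: p.2.blocks, by
      intro i hi
      rcases List.mem_cons.1 hi with h | h
      · omega
      · exact p.2.blocks_pos h, by
      have hb := p.2.blocks_sum
      have hi := p.1.2
      rw [List.sum_cons, hb]
      omega⟩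
  left_inv c := by
    have hne : c.blocks ≠ [] := by
      intro h
      have hs := c.blocks_sum
      rw [h] at hs
      simp at hs
    have hpos : 1 ≤ c.blocks.head hne := c.blocks_pos (List.head_mem hne)
    ext1
    simp only
    rw [show c.blocks.head hne - 1 + 1 = c.blocks.head hne by omega]
    exact List.cons_head_tail (l := c.blocks) hne
  right_inv p := rfl

theorem comp_sum_succ (n : ℕ) :
    ∑ c : Composition (n + 1), c.blocks.prod =
      ∑ i : Fin (n + 1), ((i : ℕ) + 1) * ∑ c : Composition (n - (i : ℕ)), c.blocks.prod := by
  rw [Fintype.sum_equiv (compSplitEquiv n)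
      (fun c => c.blocks.prod) (fun p => ((p.1 : ℕ) + 1) * p.2.blocks.prod)]
  · rw [← Finset.univ_sigma_univ, Finset.sum_sigma]
    simp [Finset.mul_sum]
  · intro c
    have hne : c.blocks ≠ [] := by
      intro h
      have hs := c.blocks_sum
      rw [h] at hs
      simp at hs
    have hpos : 1 ≤ c.blocks.head hne := c.blocks_pos (List.head_mem hne)
    show c.blocks.prod = (c.blocks.head hne - 1 + 1) * c.blocks.tail.prod
    conv_lhs => rw [← List.cons_head_tail (l := c.blocks) hne, List.prod_cons]
    congr 1
    omega

/-- Auxiliary value: `1` at `0`, otherwise `fib (2 n)`. -/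
def compF (n : ℕ) : ℕ := if n = 0 then 1 else Nat.fib (2 * n)

lemma compF_sum (n : ℕ) : ∑ j ∈ range (n + 1), compF j = Nat.fib (2 * n + 1) := by
  induction n with
  | zero => simp [compF]
  | succ n ih =>
    rw [Finset.sum_range_succ, ih, compF]
    simp only [Nat.succ_ne_zero, if_false]
    rw [show 2 * (n + 1) + 1 = (2 * n + 1) + 2 by ring, Nat.fib_add_two,
      show 2 * (n + 1) = 2 * n + 1 + 1 by ring]

lemma compF_conv (n : ℕ) :
    ∑ i ∈ range (n + 1), (i + 1) * compF (n - i) = Nat.fib (2 * (n + 1)) := by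
  induction n with
  | zero => simp [compF]
  | succ n ih =>
    have h1 : ∑ i ∈ range (n + 2), (i + 1) * compF (n + 1 - i)
        = compF (n + 1) + ∑ i ∈ range (n + 1), (i + 2) * compF (n - i) := by
      rw [Finset.sum_range_succ']
      simp only [Nat.sub_zero, Nat.zero_add, one_mul]
      rw [add_comm]
      congr 1
      apply Finset.sum_congr rfl
      intro i hi
      congr 2
      omega
    rw [h1]
    have h2 : ∑ i ∈ range (n + 1), (i + 2) * compF (n - i)
        = (∑ i ∈ range (n + 1), (i + 1) * compF (n - i)) + ∑ i ∈ range (n + 1), compF (n - i) := by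
      rw [← Finset.sum_add_distrib]
      apply Finset.sum_congr rfl
      intro i hi
      ring
    have h3 : ∑ i ∈ range (n + 1), compF (n - i) = Nat.fib (2 * n + 1) := by
      rw [← compF_sum n]
      exact Finset.sum_range_reflect compF (n + 1)
    have hc : compF (n + 1) = Nat.fib (2 * n + 2) := by
      rw [compF, if_neg (Nat.succ_ne_zero n), show 2 * (n + 1) = 2 * n + 2 by ring]
    have f2 : Nat.fib (2 * n + 1 + 2) = Nat.fib (2 * n + 1) + Nat.fib (2 * n + 1 + 1) :=
      Nat.fib_add_two
    have f3 : Nat.fib (2 * n + 2 + 2) = Nat.fib (2 * n + 2) + Nat.fib (2 * n + 2 + 1) :=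
      Nat.fib_add_two
    have e1 : 2 * (n + 2) = 2 * n + 2 + 2 := by ring
    have e2 : 2 * (n + 1) = 2 * n + 2 := by ring
    have e3 : 2 * n + 1 + 1 = 2 * n + 2 := by ring
    have e4 : 2 * n + 2 + 1 = 2 * n + 1 + 2 := by ring
    rw [h2, ih, h3, hc, e1, f3, e4, f2, e2, e3]
    ring

lemma comp_sum_eq_compF (n : ℕ) : ∑ c : Composition n, c.blocks.prod = compF n := by
  induction n using Nat.strong_induction_on with
  | _ n ih =>
    match n with
    | 0 =>
      have : ∀ c : Composition 0, c = ⟨[], by simp, by simp⟩ := by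
        intro c
        ext1
        have hs := c.blocks_sum
        cases h : c.blocks with
        | nil => rfl
        | cons a l =>
          rw [h, List.sum_cons] at hs
          have := c.blocks_pos (h ▸ (List.mem_cons_self : a ∈ a :: l))
          omega
      rw [Fintype.sum_eq_single (⟨[], by simp, by simp⟩ : Composition 0)]
      · simp [compF]
      · intro c hc
        exact absurd (this c) hc
    | n + 1 =>
      rw [comp_sum_succ n]
      have : ∀ i : Fin (n + 1), ∑ c : Composition (n - (i : ℕ)), c.blocks.prod = compF (n - i) := by
        intro i
        exact ih _ (by omega)
      simp only [this]
      rw [← Finset.sum_range fun i => (i + 1) * compF (n - i), compF_conv, compF]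
      simp

theorem composition_prod_sum_eq_fib (n : ℕ) (hn : 1 ≤ n) :
    ∑ c : Composition n, c.blocks.prod = Nat.fib (2 * n) := by
  rw [comp_sum_eq_compF, compF, if_neg (by omega)]
end
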